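/- Define g(m) = ½[Φ((mΔ − (n+m)μ)/√((n+m)(n+m+1))) + Φ((−mΔ − (n+m)μ)/√((n+m)(n+m+1)))] for real m ≥ 0. If Δ = 0 and μ > 0, then g is strictly decreasing in m. -/
import Mathlib

open MeasureTheory Real Filter
open scoped NNReal ENNReal
noncomputable def phi (x : ℝ) : ℝ := (Real.sqrt (2*Real.pi))⁻¹ * Real.exp (-x^2/2)
noncomputable def Phi (t : ℝ) : ℝ := ∫ x in Set.Iio t, phi x

lemma phi_pos (x : ℝ) : 0 < phi x := by
  unfold phi
  positivity

lemma phi_integrable : Integrable phi := by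
  have h : phi = fun x => (Real.sqrt (2*Real.pi))⁻¹ * Real.exp (-(1/2) * x^2) := by
    funext x; unfold phi; ring_nf
  rw [h]
  exact (integrable_exp_neg_mul_sq (by norm_num : (0:ℝ) < 1/2)).const_mul _

lemma Phi_strictMono : StrictMono Phi := by
  intro a b hab
  have hu : Set.Iio a ∪ Set.Ico a b = Set.Iio b := Set.Iio_union_Ico_eq_Iio hab.le
  have hsplit : Phi b = Phi a + ∫ x in Set.Ico a b, phi x := by
    unfold Phi
    rw [← hu, setIntegral_union ((Set.Iio_disjoint_Ici le_rfl).mono_right Set.Ico_subset_Ici_self) measurableSet_Ico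
      phi_integrable.integrableOn phi_integrable.integrableOn]
  have hpos : 0 < ∫ x in Set.Ico a b, phi x := by
    have := setIntegral_pos_iff_support_of_nonneg_ae
      (Filter.Eventually.of_forall (fun x => (phi_pos x).le) : 0 ≤ᵐ[volume.restrict (Set.Ico a b)] phi)
      phi_integrable.integrableOn
    rw [this]
    have : Function.support phi = Set.univ := by
      ext x; simp [Function.support, (phi_pos x).ne']
    rw [this, Set.univ_inter]
    simp [Real.volume_Ico, hab, sub_pos.2 hab]
  linarith

theorem stmt3 (μ Δ : ℝ) (hμ : 0 < μ) (hΔ : Δ = 0) (n : ℝ) (hn : 1 ≤ n) :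
    StrictAntiOn (fun m : ℝ =>
      (1 / 2) * (Phi ((m * Δ - (n + m) * μ) / Real.sqrt ((n + m) * (n + m + 1)))
               + Phi ((-(m * Δ) - (n + m) * μ) / Real.sqrt ((n + m) * (n + m + 1)))))
      (Set.Ici 0) := by
  intro a ha b hb hab
  simp only [hΔ, mul_zero, zero_sub, neg_zero, zero_sub]
  have key : ∀ x ∈ Set.Ici (0:ℝ), ∀ y ∈ Set.Ici (0:ℝ), x < y →
      (-(n + y) * μ) / Real.sqrt ((n + y) * (n + y + 1)) <
      (-(n + x) * μ) / Real.sqrt ((n + x) * (n + x + 1)) := by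
    intro x hx y hy hxy
    have hnx : 0 < n + x := by simp at hx; linarith
    have hny : 0 < n + y := by simp at hy; linarith
    have hA : 0 < (n + x) * (n + x + 1) := by nlinarith [mul_pos (mul_pos hnx hny) (sub_pos.2 hxy)]
    have hB : 0 < (n + y) * (n + y + 1) := by nlinarith [mul_pos (mul_pos hnx hny) (sub_pos.2 hxy)]
    have hsA : 0 < Real.sqrt ((n + x) * (n + x + 1)) := Real.sqrt_pos.2 hA
    have hsB : 0 < Real.sqrt ((n + y) * (n + y + 1)) := Real.sqrt_pos.2 hB
    rw [div_lt_div_iff₀ hsB hsA]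
    have hgoal : (n + x) * Real.sqrt ((n + y) * (n + y + 1)) <
        (n + y) * Real.sqrt ((n + x) * (n + x + 1)) := by
      have h2 : ((n + x) * Real.sqrt ((n + y) * (n + y + 1)))^2 <
          ((n + y) * Real.sqrt ((n + x) * (n + x + 1)))^2 := by
        rw [mul_pow, mul_pow, Real.sq_sqrt hB.le, Real.sq_sqrt hA.le]
        nlinarith [mul_pos (mul_pos hnx hny) (sub_pos.2 hxy)]
      exact lt_of_pow_lt_pow_left₀ 2 (by positivity) h2
    nlinarith [hgoal, hμ]
  have h := Phi_strictMono (key a ha b hb hab)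
  have h' : Phi ((-(n + b) * μ) / Real.sqrt ((n + b) * (n + b + 1))) <
      Phi ((-(n + a) * μ) / Real.sqrt ((n + a) * (n + a + 1))) := h
  simp only [neg_mul] at h' ⊢
  linarith
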